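/- The ℂ-bilinear bracket defined on the free ℂ-module with basis {L(α,i) : α ∈ ℤ, i ∈ ℤ, i ≥ 0} ∪ {C} by [L(α,i), L(β,j)] = ((i+1)β − (j+1)α)·L(α+β, i+j) + δ_{α+β,0}·δ_{i+j,0}·((α³−α)/6)·C and [C, x] = 0 for all x is alternating and satisfies the Jacobi identity; hence it determines a Lie algebra structure over ℂ (the Lie algebra 𝔅). -/

import Mathlib

noncomputable section

/-- The free ℂ-module with basis indexed by pairs `(α,i)`, `α ∈ ℤ`, `i ∈ ℕ`
(the elements `L(α,i)`) together with one extra basis element `C`. -/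
abbrev FreeB : Type := ((ℤ × ℕ) ⊕ Unit) →₀ ℂ

/-- The basis element `L(α,i)`. -/
def Lgen (α : ℤ) (i : ℕ) : FreeB := Finsupp.single (Sum.inl (α, i)) 1

/-- The basis element `C`. -/
def Cgen : FreeB := Finsupp.single (Sum.inr ()) 1



abbrev Idx := (ℤ × ℕ) ⊕ Unit

def fB : Idx → Idx → FreeB
  | Sum.inl (α, i), Sum.inl (β, j) =>
      (((i:ℂ)+1)*(β:ℂ) - ((j:ℂ)+1)*(α:ℂ)) • Lgen (α+β) (i+j)
        + (if α+β = 0 ∧ i+j = 0 then ((α:ℂ)^3 - (α:ℂ))/6 else 0) • Cgen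
  | _, _ => 0

def B1 (a : Idx) : FreeB →ₗ[ℂ] FreeB :=
  Finsupp.lsum ℂ (fun a' => LinearMap.toSpanSingleton ℂ FreeB (fB a a'))

def bB : FreeB →ₗ[ℂ] FreeB →ₗ[ℂ] FreeB :=
  Finsupp.lsum ℂ (fun a => LinearMap.toSpanSingleton ℂ (FreeB →ₗ[ℂ] FreeB) (B1 a))

lemma B1_single (a a' : Idx) (c : ℂ) : B1 a (Finsupp.single a' c) = c • fB a a' := by
  simp [B1]

lemma bB_single_apply (a : Idx) (c : ℂ) (x : FreeB) :
    bB (Finsupp.single a c) x = c • B1 a x := by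
  simp [bB]

lemma bB_single (a a' : Idx) : bB (Finsupp.single a 1) (Finsupp.single a' 1) = fB a a' := by
  simp [bB_single_apply, B1_single]

lemma fB_C (a : Idx) : fB (Sum.inr ()) a = 0 := by cases a <;> rfl

lemma fB_C' (a : Idx) : fB a (Sum.inr ()) = 0 := by
  cases a with
  | inl p => cases p; rfl
  | inr u => rfl

lemma bB_C (x : FreeB) : bB Cgen x = 0 := by
  rw [Cgen, bB_single_apply, one_smul]
  induction x using Finsupp.induction_linear with
  | zero => simp
  | add f g hf hg => simp [hf, hg]
  | single a c => simp [B1_single, fB_C]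

lemma fB_antisym (a a' : Idx) : fB a a' + fB a' a = 0 := by
  cases a with
  | inr u => cases u; simp [fB_C, fB_C']
  | inl p =>
    cases a' with
    | inr u => cases u; simp [fB_C, fB_C']
    | inl q =>
      obtain ⟨α, i⟩ := p; obtain ⟨β, j⟩ := q
      show (((i:ℂ)+1)*(β:ℂ) - ((j:ℂ)+1)*(α:ℂ)) • Lgen (α+β) (i+j)
        + (if α+β = 0 ∧ i+j = 0 then ((α:ℂ)^3 - (α:ℂ))/6 else 0) • Cgen
        + ((((j:ℂ)+1)*(α:ℂ) - ((i:ℂ)+1)*(β:ℂ)) • Lgen (β+α) (j+i)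
        + (if β+α = 0 ∧ j+i = 0 then ((β:ℂ)^3 - (β:ℂ))/6 else 0) • Cgen) = 0
      rw [show β+α = α+β by ring, show j+i = i+j by omega]
      split_ifs with h1
      · obtain ⟨hab, _⟩ := h1
        have hb : (β:ℂ) = -(α:ℂ) := by
          have : β = -α := by omega
          simp [this]
        rw [hb]; module
      · module

lemma bB_x_C (x : FreeB) : bB x Cgen = 0 := by
  induction x using Finsupp.induction_linear with
  | zero => simp
  | add f g hf hg => simp [hf, hg]
  | single a c => rw [bB_single_apply, Cgen, B1_single, fB_C', smul_zero, smul_zero]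

lemma jacobi_basis (a a' a'' : Idx) :
    bB (Finsupp.single a 1) (bB (Finsupp.single a' 1) (Finsupp.single a'' 1))
      = bB (bB (Finsupp.single a 1) (Finsupp.single a' 1)) (Finsupp.single a'' 1)
        + bB (Finsupp.single a' 1) (bB (Finsupp.single a 1) (Finsupp.single a'' 1)) := by
  cases a with
  | inr u =>
    cases u
    rw [show (Finsupp.single (Sum.inr () : Idx) (1:ℂ)) = Cgen from rfl]
    simp [bB_C]
  | inl p =>
  cases a' with
  | inr u =>
    cases u
    rw [show (Finsupp.single (Sum.inr () : Idx) (1:ℂ)) = Cgen from rfl]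
    simp [bB_C, bB_x_C]
  | inl q =>
  cases a'' with
  | inr u =>
    cases u
    rw [show (Finsupp.single (Sum.inr () : Idx) (1:ℂ)) = Cgen from rfl]
    simp [bB_C, bB_x_C]
  | inl r =>
  obtain ⟨α, i⟩ := p; obtain ⟨β, j⟩ := q; obtain ⟨γ, k⟩ := r
  rw [bB_single, bB_single, bB_single]
  show bB (Finsupp.single (Sum.inl (α,i)) 1) _ = bB _ (Finsupp.single (Sum.inl (γ,k)) 1)
      + bB (Finsupp.single (Sum.inl (β,j)) 1) _
  simp only [fB, Lgen, Cgen, map_add, map_smul, LinearMap.add_apply, LinearMap.smul_apply,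
    bB_single]
  rw [show α+(β+γ)=α+β+γ from by ring, show β+(α+γ)=α+β+γ from by ring,
    show i+(j+k)=i+j+k from by omega, show j+(i+k)=i+j+k from by omega]
  simp only [smul_zero, add_zero]
  split_ifs with h
  · obtain ⟨h1, h2⟩ := h
    have hg : γ = -α-β := by omega
    have hi : i = 0 := by omega
    have hj : j = 0 := by omega
    have hk : k = 0 := by omega
    subst hg hi hj hk
    push_cast
    module
  · push_cast
    module

lemma bB_antisym (x y : FreeB) : bB x y + bB y x = 0 := by
  induction x using Finsupp.induction_linear with
  | zero => simp
  | add f g hf hg =>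
    simp only [map_add, LinearMap.add_apply]
    have := hf; have := hg
    rw [show bB f y + bB g y + (bB y f + bB y g)
        = (bB f y + bB y f) + (bB g y + bB y g) by abel, hf, hg, add_zero]
  | single a c =>
    induction y using Finsupp.induction_linear with
    | zero => simp
    | add f g hf hg =>
      simp only [map_add, LinearMap.add_apply]
      rw [show bB _ f + bB _ g + (bB f _ + bB g _)
          = (bB _ f + bB f _) + (bB _ g + bB g _) by abel, hf, hg, add_zero]
    | single a' c' =>
      rw [bB_single_apply, bB_single_apply, B1_single, B1_single, smul_smul, smul_smul,
        mul_comm c' c, ← smul_add, fB_antisym, smul_zero]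

lemma bB_alt (x : FreeB) : bB x x = 0 := by
  have h : (2:ℂ) • bB x x = 0 := by rw [two_smul]; exact bB_antisym x x
  simpa using (smul_eq_zero.mp h).resolve_left (by norm_num)

lemma jacobi_all (x y z : FreeB) :
    bB x (bB y z) = bB (bB x y) z + bB y (bB x z) := by
  induction x using Finsupp.induction_linear generalizing y z with
  | zero => simp
  | add f g hf hg =>
    simp only [map_add, LinearMap.add_apply, hf, hg]; abel
  | single a c =>
  induction y using Finsupp.induction_linear generalizing z with
  | zero => simp
  | add f g hf hg =>
    simp only [map_add, LinearMap.add_apply, hf, hg]; abel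
  | single a' c' =>
  induction z using Finsupp.induction_linear with
  | zero => simp
  | add f g hf hg =>
    simp only [map_add, LinearMap.add_apply, hf, hg]; abel
  | single a'' c'' =>
    rw [show (Finsupp.single a c : FreeB) = c • Finsupp.single a 1 by
          simp [Finsupp.smul_single'],
        show (Finsupp.single a' c' : FreeB) = c' • Finsupp.single a' 1 by
          simp [Finsupp.smul_single'],
        show (Finsupp.single a'' c'' : FreeB) = c'' • Finsupp.single a'' 1 by
          simp [Finsupp.smul_single']]
    simp only [map_smul, LinearMap.smul_apply, smul_smul]
    rw [jacobi_basis]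
    module

/-- The ℂ-bilinear bracket defined on the free ℂ-module with basis
`{L(α,i)} ∪ {C}` by `[L(α,i), L(β,j)] = ((i+1)β − (j+1)α)·L(α+β,i+j)
+ δ_{α+β,0}·δ_{i+j,0}·((α³−α)/6)·C` and `[C, x] = 0` is alternating and satisfies the
Jacobi identity; hence it determines a Lie algebra structure over ℂ (the Lie algebra `𝔅`). -/
theorem block_bracket_is_lie_algebra :
    ∃ b : FreeB →ₗ[ℂ] FreeB →ₗ[ℂ] FreeB,
      (∀ (α β : ℤ) (i j : ℕ),
        b (Lgen α i) (Lgen β j)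
          = (((i : ℂ) + 1) * (β : ℂ) - ((j : ℂ) + 1) * (α : ℂ)) • Lgen (α + β) (i + j)
            + (if α + β = 0 ∧ i + j = 0 then ((α : ℂ) ^ 3 - (α : ℂ)) / 6 else 0) • Cgen) ∧
      (∀ x : FreeB, b Cgen x = 0) ∧
      (∀ x : FreeB, b x x = 0) ∧
      (∀ x y z : FreeB, b x (b y z) = b (b x y) z + b y (b x z)) := by
  refine ⟨bB, fun α β i j => ?_, bB_C, bB_alt, jacobi_all⟩
  rw [Lgen, Lgen, bB_single]
  rfl
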